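/- arXiv:1802.05969 — 2 statements merged into one kernel-verified Lean document; each statement's English description precedes it below -/
import Mathlib

section
/- The slot-replicating network semantics simulates the simple network semantics slot-wise: for any index set I and any slot i ∈ I, the projection of every slot-replicated behaviour onto slot i (restricting each node's state to its i-th component and the message soup to messages with slot field i) is a behaviour of the simple protocol semantics. -/
namespace PaxosNet

/-- Messages of a protocol: a source node, a destination node, an `active`
flag (set on sending, cleared on receipt) and a content. -/
structure Msg (C : Type*) where
  src : ℕ
  dst : ℕ
  active : Bool
  content : C

/-- An abstract distributed protocol `⟨Δ, M, S_int, S_rcv, S_snd⟩` with a set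
of initial local states, an internal step relation, a receive relation and a
send relation. -/
structure Protocol (Δ C : Type*) where
  init : Set Δ
  sint : Δ → Δ → Prop
  srcv : Δ → Msg C → Δ → Prop
  ssnd : Δ → Δ → Set (Msg C) → Prop

variable {Δ C I : Type*}

def deact (m : Msg C) : Msg C := { m with active := false }

/-- A configuration: a global state assigning local states to nodes, together
with a "message soup". -/
abbrev Conf (Δ C : Type*) := (ℕ → Δ) × Set (Msg C)

/-- The simple protocol-aware network semantics: internal steps, send steps
(adding the emitted messages to the soup) and receive steps (consuming an
active message, deactivating it, and updating the destination node). -/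
inductive SimpleStep (p : Protocol Δ C) : Conf Δ C → Conf Δ C → Prop
  | int (σ : ℕ → Δ) (M : Set (Msg C)) (n : ℕ) (δ' : Δ) :
      p.sint (σ n) δ' →
      SimpleStep p (σ, M) (Function.update σ n δ', M)
  | send (σ : ℕ → Δ) (M : Set (Msg C)) (n : ℕ) (δ' : Δ) (ms : Set (Msg C)) :
      p.ssnd (σ n) δ' ms →
      SimpleStep p (σ, M) (Function.update σ n δ', M ∪ ms)
  | recv (σ : ℕ → Δ) (M : Set (Msg C)) (m : Msg C) (δ' : Δ) :
      m ∈ M → m.active = true →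
      p.srcv (σ m.dst) m δ' →
      SimpleStep p (σ, M) (Function.update σ m.dst δ', (M \ {m}) ∪ {deact m})

/-- Behaviours of a step relation: the prefix-closed set of finite
configuration traces that start in an initial configuration and are closed
under steps. -/
def Beh {α : Type*} (step : α → α → Prop) (initC : α → Prop) : Set (List α) :=
  { t | List.Chain' step t ∧ ∀ c ∈ t.head?, initC c }

def SimpleInit (p : Protocol Δ C) : Conf Δ C → Prop :=
  fun c => ∀ n, c.1 n ∈ p.init

/-! ### Slot-replicating semantics -/

/-- Slotted messages: messages enhanced with a `slot` field from `I`. -/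
abbrev SMsg (C I : Type*) := Msg (I × C)

/-- Slot-replicated configurations: each node holds an `I`-indexed array of
local states. -/
abbrev SConf (Δ C I : Type*) := (ℕ → I → Δ) × Set (SMsg C I)

def slotOf (m : SMsg C I) : I := m.content.1

/-- Erase the slot field of a slotted message. -/
def core (m : SMsg C I) : Msg C := ⟨m.src, m.dst, m.active, m.content.2⟩

/-- Tag a message with a slot. -/
def withSlot (i : I) (m : Msg C) : SMsg C I := ⟨m.src, m.dst, m.active, (i, m.content)⟩

variable [DecidableEq I]

def updSlot (σ : ℕ → I → Δ) (n : ℕ) (i : I) (δ' : Δ) : ℕ → I → Δ :=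
  Function.update σ n (Function.update (σ n) i δ')

/-- The slot-replicating network semantics: each rule acts on the component of
a single slot, and messages are dispatched according to their slot field. -/
inductive SRStep (p : Protocol Δ C) : SConf Δ C I → SConf Δ C I → Prop
  | int (σ : ℕ → I → Δ) (M : Set (SMsg C I)) (n : ℕ) (i : I) (δ' : Δ) :
      p.sint (σ n i) δ' →
      SRStep p (σ, M) (updSlot σ n i δ', M)
  | send (σ : ℕ → I → Δ) (M : Set (SMsg C I)) (n : ℕ) (i : I) (δ' : Δ)
      (ms : Set (Msg C)) :
      p.ssnd (σ n i) δ' ms →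
      SRStep p (σ, M) (updSlot σ n i δ', M ∪ (withSlot i '' ms))
  | recv (σ : ℕ → I → Δ) (M : Set (SMsg C I)) (m : SMsg C I) (δ' : Δ) :
      m ∈ M → m.active = true →
      p.srcv (σ m.dst (slotOf m)) (core m) δ' →
      SRStep p (σ, M)
        (updSlot σ m.dst (slotOf m) δ', (M \ {m}) ∪ {deact m})

def SRInit (p : Protocol Δ C) : SConf Δ C I → Prop :=
  fun c => ∀ (n : ℕ) (i : I), c.1 n i ∈ p.init

/-- Projection of a slot-replicated configuration onto slot `i`: restrict each
node's state to the `i`-th component and the soup to the messages with slot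
field `i` (with their slot field erased). -/
def projConf (i : I) (c : SConf Δ C I) : Conf Δ C :=
  (fun n => c.1 n i, core '' { m ∈ c.2 | slotOf m = i })

lemma core_withSlot (i : I) (m : Msg C) : core (withSlot i m) = m := rfl

lemma withSlot_core (i : I) (m : SMsg C I) (h : slotOf m = i) :
    withSlot i (core m) = m := by
  cases m with
  | mk src dst act cont =>
    cases cont
    simp only [slotOf] at h
    simp [withSlot, core, h]

lemma core_inj_slot {i : I} {m m' : SMsg C I} (hm : slotOf m = i) (hm' : slotOf m' = i)
    (h : core m = core m') : m = m' := by
  rw [← withSlot_core i m hm, ← withSlot_core i m' hm', h]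

/-- Projection of a soup onto a slot. -/
def projSoup (i : I) (M : Set (SMsg C I)) : Set (Msg C) :=
  core '' { m ∈ M | slotOf m = i }

lemma projConf_eq (i : I) (c : SConf Δ C I) :
    projConf i c = (fun n => c.1 n i, projSoup i c.2) := rfl

lemma projSoup_union_withSlot_same (i : I) (M : Set (SMsg C I)) (ms : Set (Msg C)) :
    projSoup i (M ∪ (withSlot i '' ms)) = projSoup i M ∪ ms := by
  ext x
  constructor
  · rintro ⟨m, ⟨hm | ⟨y, hy, rfl⟩, hslot⟩, rfl⟩
    · exact Or.inl ⟨m, ⟨hm, hslot⟩, rfl⟩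
    · exact Or.inr (by simpa [core_withSlot] using hy)
  · rintro (⟨m, ⟨hm, hslot⟩, rfl⟩ | hx)
    · exact ⟨m, ⟨Or.inl hm, hslot⟩, rfl⟩
    · exact ⟨withSlot i x, ⟨Or.inr ⟨x, hx, rfl⟩, rfl⟩, rfl⟩

lemma projSoup_union_withSlot_ne {i j : I} (hji : j ≠ i) (M : Set (SMsg C I))
    (ms : Set (Msg C)) :
    projSoup i (M ∪ (withSlot j '' ms)) = projSoup i M := by
  ext x
  constructor
  · rintro ⟨m, ⟨hm | ⟨y, hy, rfl⟩, hslot⟩, rfl⟩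
    · exact ⟨m, ⟨hm, hslot⟩, rfl⟩
    · exact absurd hslot hji
  · rintro ⟨m, ⟨hm, hslot⟩, rfl⟩
    exact ⟨m, ⟨Or.inl hm, hslot⟩, rfl⟩

lemma slotOf_deact (m : SMsg C I) : slotOf (deact m) = slotOf m := rfl

lemma core_deact (m : SMsg C I) : core (deact m) = deact (core m) := rfl

lemma projSoup_recv_same (i : I) (M : Set (SMsg C I)) (m : SMsg C I)
    (hslot : slotOf m = i) :
    projSoup i ((M \ {m}) ∪ {deact m}) = (projSoup i M \ {core m}) ∪ {deact (core m)} := by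
  ext x
  constructor
  · rintro ⟨m', ⟨⟨hm', hne⟩ | hm', hslot'⟩, rfl⟩
    · refine Or.inl ⟨⟨m', ⟨hm', hslot'⟩, rfl⟩, ?_⟩
      intro hx
      exact hne (core_inj_slot hslot' hslot hx)
    · rcases hm' with rfl
      exact Or.inr (core_deact m)
  · rintro (⟨⟨m', ⟨hm', hslot'⟩, rfl⟩, hne⟩ | hx)
    · refine ⟨m', ⟨Or.inl ⟨hm', ?_⟩, hslot'⟩, rfl⟩
      intro h
      rw [Set.mem_singleton_iff] at h
      exact hne (by rw [h]; rfl)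
    · rcases hx with rfl
      exact ⟨deact m, ⟨Or.inr rfl, by rw [slotOf_deact, hslot]⟩, core_deact m⟩

lemma projSoup_recv_ne {i j : I} (hji : j ≠ i) (M : Set (SMsg C I)) (m : SMsg C I)
    (hslot : slotOf m = j) :
    projSoup i ((M \ {m}) ∪ {deact m}) = projSoup i M := by
  ext x
  constructor
  · rintro ⟨m', ⟨⟨hm', _⟩ | hm', hslot'⟩, rfl⟩
    · exact ⟨m', ⟨hm', hslot'⟩, rfl⟩
    · rcases hm' with rfl
      rw [slotOf_deact] at hslot'
      exact absurd (hslot.symm.trans hslot') hji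
  · rintro ⟨m', ⟨hm', hslot'⟩, rfl⟩
    refine ⟨m', ⟨Or.inl ⟨hm', ?_⟩, hslot'⟩, rfl⟩
    rintro rfl
    exact hji (hslot ▸ hslot')

lemma updSlot_proj_same (σ : ℕ → I → Δ) (n : ℕ) (i : I) (δ' : Δ) :
    (fun k => updSlot σ n i δ' k i) = Function.update (fun k => σ k i) n δ' := by
  funext k
  by_cases hk : k = n
  · subst hk; simp [updSlot]
  · simp [updSlot, Function.update_of_ne hk]

lemma updSlot_proj_ne {i j : I} (hji : j ≠ i) (σ : ℕ → I → Δ) (n : ℕ) (δ' : Δ) :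
    (fun k => updSlot σ n j δ' k i) = fun k => σ k i := by
  funext k
  by_cases hk : k = n
  · subst hk; simp [updSlot, Function.update_of_ne (Ne.symm hji)]
  · simp [updSlot, Function.update_of_ne hk]

lemma proj_step (p : Protocol Δ C) (hid : ∀ δ, p.sint δ δ) (i : I)
    {c c' : SConf Δ C I} (h : SRStep p c c') :
    SimpleStep p (projConf i c) (projConf i c') := by
  cases h with
  | int σ M n j δ' hs =>
    by_cases hji : j = i
    · subst hji
      rw [projConf_eq, projConf_eq]
      simp only [updSlot_proj_same]
      exact SimpleStep.int _ _ n δ' hs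
    · rw [projConf_eq, projConf_eq]
      simp only [updSlot_proj_ne hji]
      have := SimpleStep.int (p := p) (fun k => σ k i) (projSoup i M) n
        ((fun k => σ k i) n) (hid _)
      rwa [Function.update_eq_self] at this
  | send σ M n j δ' ms hs =>
    by_cases hji : j = i
    · subst hji
      rw [projConf_eq, projConf_eq]
      simp only [updSlot_proj_same, projSoup_union_withSlot_same]
      exact SimpleStep.send _ _ n δ' ms hs
    · rw [projConf_eq, projConf_eq]
      simp only [updSlot_proj_ne hji, projSoup_union_withSlot_ne hji]
      have := SimpleStep.int (p := p) (fun k => σ k i) (projSoup i M) n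
        ((fun k => σ k i) n) (hid _)
      rwa [Function.update_eq_self] at this
  | recv σ M m δ' hm hact hs =>
    by_cases hji : slotOf m = i
    · subst hji
      rw [projConf_eq, projConf_eq]
      simp only [projSoup_recv_same _ M m rfl, updSlot_proj_same]
      exact SimpleStep.recv _ _ (core m) δ' ⟨m, ⟨hm, rfl⟩, rfl⟩ hact hs
    · rw [projConf_eq, projConf_eq]
      simp only [updSlot_proj_ne hji, projSoup_recv_ne hji M m rfl]
      have := SimpleStep.int (p := p) (fun k => σ k i) (projSoup i M) m.dst
        ((fun k => σ k i) m.dst) (hid _)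
      rwa [Function.update_eq_self] at this

/-- **Slot-replicating simulation** (one direction): for any index set `I` and
slot `i ∈ I`, the slot-`i` projection of every behaviour of the
slot-replicating semantics is a behaviour of the simple protocol semantics
(the protocol's internal step relation contains the identity). -/
theorem slot_projection_is_simple_behaviour
    (p : Protocol Δ C) (hid : ∀ δ, p.sint δ δ) (i : I) :
    ∀ t ∈ Beh (SRStep (I := I) p) (SRInit p),
      t.map (projConf i) ∈ Beh (SimpleStep p) (SimpleInit p) := by
  intro t ht
  obtain ⟨hchain, hinit⟩ := ht
  constructor
  · unfold List.Chain' at hchain ⊢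
    rw [List.isChain_map]
    exact hchain.imp (fun a b hab => proj_step p hid i hab)
  · intro c hc
    rw [List.head?_map] at hc
    rcases Option.map_eq_some_iff.mp hc with ⟨c', hc', rfl⟩
    intro n
    exact hinit c' hc' n i

end PaxosNet
end

section
/- In a system of n acceptors each running the Round-Based Register acceptor transition, if a write with round k and value v was acknowledged by a quorum Q1 (|Q1| ≥ ⌈(n+1)/2⌉), and afterwards a read with round k' > k collects read-acknowledgements from a quorum Q2, then some acceptor in Q2 reports an accepted value with write round ≥ k; in particular the maximum reported write round among Q2's acknowledgements is at least k. -/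
/-- Local state of a Round-Based Register acceptor. -/
structure AccSt (V : Type*) where
  v : Option V
  r : ℕ
  w : ℕ

/-- Acceptor transitions of the Round-Based Register. -/
inductive AStep {V : Type*} : AccSt V → AccSt V → Prop
  | readNack (s : AccSt V) (k : ℕ) : k < s.r → AStep s s
  | readAck (s : AccSt V) (k : ℕ) : s.r ≤ k → AStep s ⟨s.v, k, s.w⟩
  | writeNack (s : AccSt V) (k : ℕ) (vW : V) : k < s.r → AStep s s
  | writeAck (s : AccSt V) (k : ℕ) (vW : V) : s.r ≤ k → AStep s ⟨some vW, k, k⟩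

lemma astep_mono {V : Type*} {s s' : AccSt V} (h : AStep s s') (hwr : s.w ≤ s.r) :
    s.w ≤ s'.w ∧ s'.w ≤ s'.r := by
  cases h with
  | readNack k h => exact ⟨le_refl _, hwr⟩
  | readAck k h => exact ⟨le_refl _, hwr.trans h⟩
  | writeNack k vW h => exact ⟨le_refl _, hwr⟩
  | writeAck k vW h => exact ⟨hwr.trans h, le_refl _⟩

lemma w_mono {ι V : Type*} (states : ι → ℕ → AccSt V)
    (hinit : ∀ j, states j 0 = (⟨none, 0, 0⟩ : AccSt V))
    (hstep : ∀ j t, states j t = states j (t + 1) ∨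
      AStep (states j t) (states j (t + 1))) (j : ι) :
    ∀ t, (states j t).w ≤ (states j t).r ∧
      ∀ t', t ≤ t' → (states j t).w ≤ (states j t').w := by
  have key : ∀ t, (states j t).w ≤ (states j t).r ∧
      (states j t).w ≤ (states j (t + 1)).w := by
    intro t
    induction t with
    | zero =>
      constructor
      · rw [hinit]
      · rcases hstep j 0 with h | h
        · rw [← h]
        · exact (astep_mono h (by rw [hinit j])).1
    | succ t ih =>
      have hinv : (states j (t+1)).w ≤ (states j (t+1)).r := by
        rcases hstep j t with h | h
        · rw [← h]; exact ih.1
        · exact (astep_mono h ih.1).2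
      refine ⟨hinv, ?_⟩
      rcases hstep j (t+1) with h | h
      · rw [← h]
      · exact (astep_mono h hinv).1
  intro t
  refine ⟨(key t).1, ?_⟩
  intro t' htt'
  induction t' with
  | zero => simp_all
  | succ t' ih =>
    rcases Nat.lt_or_ge t (t' + 1) with h | h
    · exact (ih (Nat.lt_succ_iff.mp h)).trans (key t').2
    · have heq : t = t' + 1 := le_antisymm htt' h
      rw [heq]

/-- In a system of `n` acceptors (a finite set `A` of identifiers, each running
the acceptor transition system, with global executions modelled as
interleavings: at each time step every acceptor either stutters or takes an
`AStep`), if a write with round `k` and value `v` was acknowledged before time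
`t0` by every member of a quorum `Q1` (`|Q1| ≥ ⌈(n+1)/2⌉`), and afterwards a
read with round `k' > k` collects read-acknowledgements (at times `readT j ≥
t0`) from every member of a quorum `Q2`, then some acceptor in `Q2` reports an
accepted value with write round at least `k`; in particular the maximum
reported write round among `Q2`'s acknowledgements is at least `k`. -/
theorem quorum_read_sees_quorum_write {ι V : Type*}
    (A Q1 Q2 : Finset ι) (n : ℕ)
    (states : ι → ℕ → AccSt V)
    (hinit : ∀ j, states j 0 = (⟨none, 0, 0⟩ : AccSt V))
    (hstep : ∀ j t, states j t = states j (t + 1) ∨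
      AStep (states j t) (states j (t + 1)))
    (hA : A.card = n) (hQ1A : Q1 ⊆ A) (hQ2A : Q2 ⊆ A)
    (hc1 : (n + 1 + 1) / 2 ≤ Q1.card) (hc2 : (n + 1 + 1) / 2 ≤ Q2.card)
    (k k' : ℕ) (v : V) (t0 : ℕ) (hkk' : k < k')
    (readT : ι → ℕ)
    -- every acceptor in Q1 executed a write-acknowledgement for (k, v)
    -- strictly before t0
    (hwr : ∀ j ∈ Q1, ∃ t, t + 1 ≤ t0 ∧ (states j t).r ≤ k ∧
      states j (t + 1) = (⟨some v, k, k⟩ : AccSt V))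
    -- every acceptor in Q2 executed a read-acknowledgement at round k' at
    -- time readT j ≥ t0, reporting its current pair (v, w)
    (hrd : ∀ j ∈ Q2, t0 ≤ readT j ∧ (states j (readT j)).r ≤ k' ∧
      states j (readT j + 1) =
        (⟨(states j (readT j)).v, k', (states j (readT j)).w⟩ : AccSt V)) :
    ∃ j ∈ Q2, k ≤ (states j (readT j)).w := by
  classical
  -- quorum intersection
  have hinter : (Q1 ∩ Q2).Nonempty := by
    rw [← Finset.card_pos]
    have h1 := Finset.card_union_add_card_inter Q1 Q2
    have h2 : (Q1 ∪ Q2).card ≤ n := hA ▸ Finset.card_le_card (Finset.union_subset hQ1A hQ2A)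
    omega
  obtain ⟨j, hj⟩ := hinter
  have hj1 : j ∈ Q1 := Finset.mem_of_mem_inter_left hj
  have hj2 : j ∈ Q2 := Finset.mem_of_mem_inter_right hj
  obtain ⟨t, ht0, _, hw⟩ := hwr j hj1
  obtain ⟨hrt, _, _⟩ := hrd j hj2
  refine ⟨j, hj2, ?_⟩
  have := (w_mono states hinit hstep j (t+1)).2 (readT j) (ht0.trans hrt)
  rw [hw] at this
  exact this
end
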